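/- Under Assumptions (A1) and (A2), for every v ∈ ℝ^N one has 0 ≤ ⟨T̃v, v⟩ ≤ (2t − 1)·⟨v, v⟩; if moreover γ₁ < min{λ̲₁, λ̲₂}, then ⟨T̃v, v⟩ > 0 for every v ≠ 0, so the spectrum of the symmetric matrix T̃ is contained in the interval (0, 2t − 1]. -/

import Mathlib

open Matrix

section PosSemidefSqrt

open scoped ComplexOrder

/-- The positive semidefinite square root of a positive semidefinite matrix
(removed from Mathlib; restored with its former definition). -/
noncomputable def Matrix.PosSemidef.sqrt {n : Type*} [Fintype n] [DecidableEq n] {𝕜 : Type*}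
    [RCLike 𝕜] {A : Matrix n n 𝕜} (hA : A.PosSemidef) : Matrix n n 𝕜 :=
  hA.1.eigenvectorUnitary.1 * diagonal ((↑) ∘ (√·) ∘ hA.1.eigenvalues) *
  (star hA.1.eigenvectorUnitary : Matrix n n 𝕜)

end PosSemidefSqrt

set_option linter.unusedSectionVars false
set_option maxHeartbeats 1000000

variable {n : Type*} [Fintype n] [DecidableEq n]

lemma Matrix.PosSemidef.posSemidef_sqrt {A : Matrix n n ℝ} (hA : A.PosSemidef) :
    hA.sqrt.PosSemidef := by
  unfold Matrix.PosSemidef.sqrt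
  rw [Matrix.star_eq_conjTranspose]
  exact (PosSemidef.diagonal fun i => by simp).mul_mul_conjTranspose_same _

lemma Matrix.PosSemidef.sqrt_mul_self {A : Matrix n n ℝ} (hA : A.PosSemidef) :
    hA.sqrt * hA.sqrt = A := by
  have hU : (star hA.1.eigenvectorUnitary : Matrix n n ℝ) * hA.1.eigenvectorUnitary = 1 :=
    Unitary.coe_star_mul_self _
  have key : ∀ (a b c : Matrix n n ℝ), c * a = 1 → a * b * c * (a * b * c) = a * (b * b) * c := by
    intro a b c h
    rw [show a * b * c * (a * b * c) = a * b * (c * a) * b * c by simp only [mul_assoc], h,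
      mul_one, mul_assoc a b b]
  unfold Matrix.PosSemidef.sqrt
  rw [key _ _ _ hU, diagonal_mul_diagonal]
  conv_rhs => rw [hA.1.spectral_theorem, Unitary.conjStarAlgAut_apply]
  congr 3
  funext i
  simp [Real.mul_self_sqrt (hA.eigenvalues_nonneg i)]

lemma dotsym {M : Matrix n n ℝ} (hM : M.IsHermitian) (x y : n → ℝ) :
    (M *ᵥ x) ⬝ᵥ y = x ⬝ᵥ (M *ᵥ y) := by
  rw [dotProduct_mulVec, ← mulVec_transpose, ← conjTranspose_eq_transpose_of_trivial M, hM.eq]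

lemma psd_quad_nonneg {M : Matrix n n ℝ} (hM : M.PosSemidef) (v : n → ℝ) :
    0 ≤ (M *ᵥ v) ⬝ᵥ v := by
  have := hM.dotProduct_mulVec_nonneg v
  rwa [star_trivial, dotProduct_comm] at this

lemma pd_quad_pos {M : Matrix n n ℝ} (hM : M.PosDef) {v : n → ℝ} (hv : v ≠ 0) :
    0 < (M *ᵥ v) ⬝ᵥ v := by
  have := hM.dotProduct_mulVec_pos hv
  rwa [star_trivial, dotProduct_comm] at this

lemma psd_smul' {c : ℝ} (hc : 0 ≤ c) {M : Matrix n n ℝ} (hM : M.PosSemidef) :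
    (c • M).PosSemidef := by
  refine PosSemidef.of_dotProduct_mulVec_nonneg ?_ (fun x => ?_)
  · unfold Matrix.IsHermitian
    rw [conjTranspose_smul, hM.1.eq, star_trivial]
  · rw [smul_mulVec, dotProduct_smul, smul_eq_mul]
    exact mul_nonneg hc (hM.dotProduct_mulVec_nonneg x)

lemma quad_le_of_psd_sub {A B : Matrix n n ℝ} (h : (B - A).PosSemidef) (v : n → ℝ) :
    (A *ᵥ v) ⬝ᵥ v ≤ (B *ᵥ v) ⬝ᵥ v := by
  have := psd_quad_nonneg h v
  rw [sub_mulVec, sub_dotProduct] at this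
  linarith

lemma rayleigh_upper {A : Matrix n n ℝ} (hA : A.IsHermitian) {c : ℝ}
    (h : ∀ i, hA.eigenvalues i ≤ c) :
    (c • (1 : Matrix n n ℝ) - A).PosSemidef := by
  set U : Matrix n n ℝ := (hA.eigenvectorUnitary : Matrix n n ℝ)
  have hU : U * Uᴴ = 1 := by
    rw [← Matrix.star_eq_conjTranspose]
    exact (Matrix.mem_unitaryGroup_iff).mp hA.eigenvectorUnitary.2
  have hdg : c • (1 : Matrix n n ℝ) - A
      = U * (diagonal fun i => c - hA.eigenvalues i) * Uᴴ := by
    have hspec := hA.spectral_theorem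
    have hdiag : (diagonal fun i => c - hA.eigenvalues i)
        = c • (1 : Matrix n n ℝ) - diagonal (RCLike.ofReal ∘ hA.eigenvalues) := by
      rw [smul_one_eq_diagonal, ← diagonal_sub]
      rfl
    rw [hdiag, mul_sub, sub_mul, mul_smul_comm, mul_one, smul_mul_assoc, hU]
    rw [← Matrix.star_eq_conjTranspose]
    exact congrArg (c • (1 : Matrix n n ℝ) - ·) hspec
  rw [hdg]
  exact (PosSemidef.diagonal fun i => sub_nonneg.2 (h i)).mul_mul_conjTranspose_same U

lemma rayleigh_lower {A : Matrix n n ℝ} (hA : A.IsHermitian) {c : ℝ}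
    (h : ∀ i, c ≤ hA.eigenvalues i) :
    (A - c • (1 : Matrix n n ℝ)).PosSemidef := by
  set U : Matrix n n ℝ := (hA.eigenvectorUnitary : Matrix n n ℝ)
  have hU : U * Uᴴ = 1 := by
    rw [← Matrix.star_eq_conjTranspose]
    exact (Matrix.mem_unitaryGroup_iff).mp hA.eigenvectorUnitary.2
  have hdg : A - c • (1 : Matrix n n ℝ)
      = U * (diagonal fun i => hA.eigenvalues i - c) * Uᴴ := by
    have hspec := hA.spectral_theorem
    have hdiag : (diagonal fun i => hA.eigenvalues i - c)
        = diagonal (RCLike.ofReal ∘ hA.eigenvalues) - c • (1 : Matrix n n ℝ) := by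
      rw [smul_one_eq_diagonal, ← diagonal_sub]
      rfl
    rw [hdiag, mul_sub, sub_mul, mul_smul_comm, mul_one, smul_mul_assoc, hU]
    rw [← Matrix.star_eq_conjTranspose]
    exact congrArg (· - c • (1 : Matrix n n ℝ)) hspec
  rw [hdg]
  exact (PosSemidef.diagonal fun i => sub_nonneg.2 (h i)).mul_mul_conjTranspose_same U


/-- under Assumptions (A1) and (A2), `0 ≤ ⟨T̃v, v⟩ ≤ (2t - 1)⟨v, v⟩`
for every `v`; if moreover `γ₁ < min{λ̲₁, λ̲₂}`, then `⟨T̃v, v⟩ > 0` for every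
`v ≠ 0`, so the spectrum of the symmetric matrix `T̃` is contained in `(0, 2t - 1]`. -/
theorem tildeT_spectrum_bound (N : ℕ) (hN : 1 ≤ N)
    (S1 S2 : Matrix (Fin N) (Fin N) ℝ) (hS1 : S1.PosDef) (hS2 : S2.PosDef)
    (lmin1 lmax1 lmin2 lmax2 : ℝ)
    (hlmin1 : IsLeast (Set.range hS1.isHermitian.eigenvalues) lmin1)
    (hlmax1 : IsGreatest (Set.range hS1.isHermitian.eigenvalues) lmax1)
    (hlmin2 : IsLeast (Set.range hS2.isHermitian.eigenvalues) lmin2)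
    (hlmax2 : IsGreatest (Set.range hS2.isHermitian.eigenvalues) lmax2)
    (s t : ℝ) (hs : 0 < s) (hs1 : s ≤ 1) (ht : 1 ≤ t)
    (hA1 : ∀ v : Fin N → ℝ,
      s * ((S1 *ᵥ v) ⬝ᵥ v) ≤ (S2 *ᵥ v) ⬝ᵥ v ∧ (S2 *ᵥ v) ⬝ᵥ v ≤ t * ((S1 *ᵥ v) ⬝ᵥ v))
    (γ1 γ2 : ℝ) (hγ1 : 0 < γ1) (hγ1' : γ1 ≤ min lmin1 lmin2)
    (hγ2 : 3 * max lmax1 lmax2 ≤ γ2)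
    (hP1 : (γ1 • (1 : Matrix (Fin N) (Fin N) ℝ) + S1).PosSemidef)
    (hQ1 : (γ2 • (1 : Matrix (Fin N) (Fin N) ℝ) - S1).PosSemidef)
    (Tt : Matrix (Fin N) (Fin N) ℝ)
    (hTt : Tt = hP1.sqrt⁻¹ * hQ1.sqrt * (S2 - γ1 • (1 : Matrix (Fin N) (Fin N) ℝ)) *
      (γ2 • (1 : Matrix (Fin N) (Fin N) ℝ) + S2)⁻¹ * hQ1.sqrt * hP1.sqrt⁻¹) :
    (∀ v : Fin N → ℝ,
      0 ≤ (Tt *ᵥ v) ⬝ᵥ v ∧ (Tt *ᵥ v) ⬝ᵥ v ≤ (2 * t - 1) * (v ⬝ᵥ v)) ∧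
      (γ1 < min lmin1 lmin2 →
        (∀ v : Fin N → ℝ, v ≠ 0 → 0 < (Tt *ᵥ v) ⬝ᵥ v) ∧
          spectrum ℝ Tt ⊆ Set.Ioc 0 (2 * t - 1)) := by
  classical
  set P : Matrix (Fin N) (Fin N) ℝ := γ1 • 1 + S1 with hPdef
  set Q : Matrix (Fin N) (Fin N) ℝ := γ2 • 1 - S1 with hQdef
  set R : Matrix (Fin N) (Fin N) ℝ := γ2 • 1 + S2 with hRdef
  set C : Matrix (Fin N) (Fin N) ℝ := S2 - γ1 • 1 with hCdef
  set sp : Matrix (Fin N) (Fin N) ℝ := hP1.sqrt with hspdef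
  set sq : Matrix (Fin N) (Fin N) ℝ := hQ1.sqrt with hsqdef
  -- scalar facts
  have hlmax1pos : 0 < lmax1 := by
    obtain ⟨i, hi⟩ := hlmax1.1; exact hi ▸ hS1.eigenvalues_pos i
  have hlmax2pos : 0 < lmax2 := by
    obtain ⟨i, hi⟩ := hlmax2.1; exact hi ▸ hS2.eigenvalues_pos i
  have hγ2pos : 0 < γ2 := by
    have := le_max_left lmax1 lmax2; nlinarith
  have hγ2ne : γ2 ≠ 0 := hγ2pos.ne'
  have hγ2gt1 : lmax1 < γ2 := by
    have := le_max_left lmax1 lmax2; nlinarith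
  have hγ1min2 : γ1 ≤ lmin2 := le_trans hγ1' (min_le_right _ _)
  have eig1le : ∀ i, hS1.isHermitian.eigenvalues i ≤ lmax1 := fun i => hlmax1.2 ⟨i, rfl⟩
  have eig2ge : ∀ i, lmin2 ≤ hS2.isHermitian.eigenvalues i := fun i => hlmin2.2 ⟨i, rfl⟩
  -- quadratic bounds
  have hxx : ∀ x : Fin N → ℝ, 0 ≤ x ⬝ᵥ x := by
    intro x
    have := dotProduct_self_star_nonneg x
    rwa [star_trivial] at this
  have hxxpos : ∀ x : Fin N → ℝ, x ≠ 0 → 0 < x ⬝ᵥ x := by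
    intro x hx
    have := dotProduct_star_self_pos_iff.mpr hx
    rwa [star_trivial] at this
  have hS1ub : ∀ x : Fin N → ℝ, (S1 *ᵥ x) ⬝ᵥ x ≤ lmax1 * (x ⬝ᵥ x) := by
    intro x
    have := quad_le_of_psd_sub (rayleigh_upper hS1.isHermitian eig1le) x
    simpa [smul_mulVec, smul_dotProduct] using this
  have hS2lb : ∀ x : Fin N → ℝ, lmin2 * (x ⬝ᵥ x) ≤ (S2 *ᵥ x) ⬝ᵥ x := by
    intro x
    have := quad_le_of_psd_sub (rayleigh_lower hS2.isHermitian eig2ge) x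
    simpa [smul_mulVec, smul_dotProduct] using this
  -- hermitian facts
  have hone1 : (γ1 • (1 : Matrix (Fin N) (Fin N) ℝ)).IsHermitian := by
    unfold Matrix.IsHermitian
    rw [conjTranspose_smul, conjTranspose_one, star_trivial]
  have hone2 : (γ2 • (1 : Matrix (Fin N) (Fin N) ℝ)).IsHermitian := by
    unfold Matrix.IsHermitian
    rw [conjTranspose_smul, conjTranspose_one, star_trivial]
  have hRherm : R.IsHermitian := hone2.add hS2.isHermitian
  have hCherm : C.IsHermitian := hS2.isHermitian.sub hone1
  have hsp : sp.IsHermitian := hP1.posSemidef_sqrt.1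
  have hsq : sq.IsHermitian := hQ1.posSemidef_sqrt.1
  have hspi : (sp⁻¹).IsHermitian := hsp.inv
  -- pos def facts
  have hPd : P.PosDef := by
    refine PosDef.of_dotProduct_mulVec_pos hP1.1 (fun x hx => ?_)
    have h1 := psd_quad_nonneg hS1.posSemidef x
    have h2 := hxxpos x hx
    rw [star_trivial, hPdef, add_mulVec, smul_mulVec, one_mulVec, dotProduct_add,
      dotProduct_smul, smul_eq_mul, dotProduct_comm]
    nlinarith [dotProduct_comm x (S1 *ᵥ x), dotProduct_comm x (S2 *ᵥ x)]
  have hQd : Q.PosDef := by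
    refine PosDef.of_dotProduct_mulVec_pos hQ1.1 (fun x hx => ?_)
    have h1 := hS1ub x
    have h2 := hxxpos x hx
    rw [star_trivial, hQdef, sub_mulVec, smul_mulVec, one_mulVec, dotProduct_sub,
      dotProduct_smul, smul_eq_mul, dotProduct_comm]
    nlinarith [dotProduct_comm x (S1 *ᵥ x), dotProduct_comm x (S2 *ᵥ x)]
  have hRd : R.PosDef := by
    refine PosDef.of_dotProduct_mulVec_pos hRherm (fun x hx => ?_)
    have h1 := psd_quad_nonneg hS2.posSemidef x
    have h2 := hxxpos x hx
    rw [star_trivial, hRdef, add_mulVec, smul_mulVec, one_mulVec, dotProduct_add,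
      dotProduct_smul, smul_eq_mul, dotProduct_comm]
    nlinarith [dotProduct_comm x (S1 *ᵥ x), dotProduct_comm x (S2 *ᵥ x)]
  have hCpsd : C.PosSemidef := by
    refine PosSemidef.of_dotProduct_mulVec_nonneg hCherm (fun x => ?_)
    have h1 := hS2lb x
    have h2 := hxx x
    rw [star_trivial, hCdef, sub_mulVec, smul_mulVec, one_mulVec, dotProduct_sub,
      dotProduct_smul, smul_eq_mul, dotProduct_comm]
    nlinarith [dotProduct_comm x (S1 *ᵥ x), dotProduct_comm x (S2 *ᵥ x)]
  -- units
  have uP : IsUnit sp.det := by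
    have hd : sp.det * sp.det = P.det := by rw [← det_mul, hP1.sqrt_mul_self]
    have := hPd.det_pos
    rw [isUnit_iff_ne_zero]
    intro h0; rw [h0, mul_zero] at hd; linarith [hd ▸ this]
  have uQ : IsUnit sq.det := by
    have hd : sq.det * sq.det = Q.det := by rw [← det_mul, hQ1.sqrt_mul_self]
    have := hQd.det_pos
    rw [isUnit_iff_ne_zero]
    intro h0; rw [h0, mul_zero] at hd; linarith [hd ▸ this]
  have uR : IsUnit R.det := hRd.isUnit.map (Matrix.detMonoidHom)
  -- algebraic identities
  have idRC : R * C = C * C + (γ1 + γ2) • C := by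
    rw [hRdef, hCdef]
    simp only [mul_sub, sub_mul, add_mul, mul_add, smul_mul_assoc, mul_smul_comm, mul_one,
      one_mul, smul_sub, smul_add, add_smul, smul_smul, mul_assoc]
    module
  have hRCpsd : (R * C).PosSemidef := by
    rw [idRC]
    have hCC : (C * C).PosSemidef := by
      have := hCpsd.pow 2; rwa [pow_two] at this
    exact hCC.add (psd_smul' (by linarith) hCpsd)
  have idD : γ2⁻¹ • (R * (S2 * R)) - R * C
      = γ2⁻¹ • (S2 * (S2 * S2)) + S2 * S2 + γ1 • S2 + (γ1 * γ2) • (1 : Matrix (Fin N) (Fin N) ℝ) := by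
    rw [hRdef, hCdef]
    simp only [mul_sub, sub_mul, add_mul, mul_add, smul_mul_assoc, mul_smul_comm, mul_one,
      one_mul, smul_sub, smul_add, add_smul, smul_smul, mul_assoc]
    match_scalars <;> field_simp <;> norm_num
  have hDpsd : (γ2⁻¹ • (R * (S2 * R)) - R * C).PosSemidef := by
    rw [idD]
    have h3 : (S2 * (S2 * S2)).PosSemidef := by
      have := hS2.posSemidef.pow 3
      rwa [pow_succ, pow_two, mul_assoc] at this
    have h2 : (S2 * S2).PosSemidef := by
      have := hS2.posSemidef.pow 2; rwa [pow_two] at this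
    exact (((psd_smul' (by positivity) h3).add h2).add
      (psd_smul' hγ1.le hS2.posSemidef)).add
      (psd_smul' (by positivity) Matrix.PosSemidef.one)
  have idQS : sq * (S1 * sq) = γ2 • Q - Q * Q := by
    have hS1Q : S1 = γ2 • (1 : Matrix (Fin N) (Fin N) ℝ) - Q := by rw [hQdef]; module
    rw [hS1Q, ← hQ1.sqrt_mul_self, ← hsqdef]
    simp only [mul_sub, sub_mul, mul_smul_comm, smul_mul_assoc, one_mul, mul_one, mul_assoc]
  have idS1 : γ2 • S1 - sq * (S1 * sq) = S1 * S1 := by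
    rw [idQS, hQdef]
    simp only [mul_sub, sub_mul, mul_smul_comm, smul_mul_assoc, one_mul, mul_one,
      smul_sub, smul_smul, mul_assoc]
    module
  have hpsdS1 : (γ2 • S1 - sq * (S1 * sq)).PosSemidef := by
    rw [idS1]
    have := hS1.posSemidef.pow 2; rwa [pow_two] at this
  -- per-vector computations
  have hRRi : ∀ z : Fin N → ℝ, R *ᵥ (R⁻¹ *ᵥ z) = z := fun z => by
    rw [mulVec_mulVec, mul_nonsing_inv _ uR, one_mulVec]
  have quadform : ∀ v : Fin N → ℝ, (Tt *ᵥ v) ⬝ᵥ v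
      = ((R * C) *ᵥ (R⁻¹ *ᵥ (sq *ᵥ (sp⁻¹ *ᵥ v)))) ⬝ᵥ (R⁻¹ *ᵥ (sq *ᵥ (sp⁻¹ *ᵥ v))) := by
    intro v
    rw [hTt]
    simp only [← mulVec_mulVec]
    rw [dotsym hspi, dotsym hsq, dotsym hRherm, hRRi]
  have upper : ∀ v : Fin N → ℝ, (Tt *ᵥ v) ⬝ᵥ v ≤ (2 * t - 1) * (v ⬝ᵥ v) := by
    intro v
    set x : Fin N → ℝ := sp⁻¹ *ᵥ v with hxdef
    set w : Fin N → ℝ := sq *ᵥ x with hwdef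
    set u : Fin N → ℝ := R⁻¹ *ᵥ w with hudef
    have hw : R *ᵥ u = w := by rw [hudef, hRRi]
    have hv' : sp *ᵥ x = v := by
      rw [hxdef, mulVec_mulVec, mul_nonsing_inv _ uP, one_mulVec]
    have eP : (P *ᵥ x) ⬝ᵥ x = v ⬝ᵥ v := by
      rw [← hP1.sqrt_mul_self, ← hspdef, ← mulVec_mulVec, dotsym hsp, hv']
    have ePe : (P *ᵥ x) ⬝ᵥ x = γ1 * (x ⬝ᵥ x) + (S1 *ᵥ x) ⬝ᵥ x := by
      rw [hPdef, add_mulVec, smul_mulVec, one_mulVec, add_dotProduct,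
        smul_dotProduct, smul_eq_mul]
    have e3 : ((sq * (S1 * sq)) *ᵥ x) ⬝ᵥ x = (S1 *ᵥ w) ⬝ᵥ w := by
      simp only [← mulVec_mulVec]
      rw [← hwdef, dotsym hsq, ← hwdef]
    have i1' : ((γ2⁻¹ • (R * (S2 * R))) *ᵥ u) ⬝ᵥ u = γ2⁻¹ * ((S2 *ᵥ w) ⬝ᵥ w) := by
      rw [smul_mulVec, smul_dotProduct, smul_eq_mul]
      congr 1
      simp only [← mulVec_mulVec]
      rw [hw, dotsym hRherm, hw]
    have hS1xx := psd_quad_nonneg hS1.posSemidef x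
    have hvv : v ⬝ᵥ v = γ1 * (x ⬝ᵥ x) + (S1 *ᵥ x) ⬝ᵥ x := by rw [← eP, ePe]
    calc (Tt *ᵥ v) ⬝ᵥ v = ((R * C) *ᵥ u) ⬝ᵥ u := quadform v
      _ ≤ ((γ2⁻¹ • (R * (S2 * R))) *ᵥ u) ⬝ᵥ u := quad_le_of_psd_sub hDpsd u
      _ = γ2⁻¹ * ((S2 *ᵥ w) ⬝ᵥ w) := i1'
      _ ≤ γ2⁻¹ * (t * ((S1 *ᵥ w) ⬝ᵥ w)) :=
          mul_le_mul_of_nonneg_left (hA1 w).2 (by positivity)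
      _ ≤ γ2⁻¹ * (t * (γ2 * ((S1 *ᵥ x) ⬝ᵥ x))) := by
          apply mul_le_mul_of_nonneg_left _ (by positivity : (0:ℝ) ≤ γ2⁻¹)
          apply mul_le_mul_of_nonneg_left _ (by linarith : (0:ℝ) ≤ t)
          calc (S1 *ᵥ w) ⬝ᵥ w = ((sq * (S1 * sq)) *ᵥ x) ⬝ᵥ x := e3.symm
            _ ≤ ((γ2 • S1) *ᵥ x) ⬝ᵥ x := quad_le_of_psd_sub hpsdS1 x
            _ = γ2 * ((S1 *ᵥ x) ⬝ᵥ x) := by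
                rw [smul_mulVec, smul_dotProduct, smul_eq_mul]
      _ = t * ((S1 *ᵥ x) ⬝ᵥ x) := by field_simp
      _ ≤ (2 * t - 1) * (v ⬝ᵥ v) := by
          nlinarith [hxx x, mul_nonneg (sub_nonneg.mpr ht) hS1xx,
            mul_nonneg (mul_nonneg (by linarith : (0:ℝ) ≤ 2 * t - 1) hγ1.le) (hxx x)]
  have lower : ∀ v : Fin N → ℝ, 0 ≤ (Tt *ᵥ v) ⬝ᵥ v := by
    intro v
    rw [quadform v]
    exact psd_quad_nonneg hRCpsd _
  refine ⟨fun v => ⟨lower v, upper v⟩, fun hlt => ?_⟩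
  have hγ1lt2 : γ1 < lmin2 := lt_of_lt_of_le hlt (min_le_right _ _)
  have hCd : C.PosDef := by
    refine PosDef.of_dotProduct_mulVec_pos hCherm (fun x hx => ?_)
    have h1 := hS2lb x
    have h2 := hxxpos x hx
    rw [star_trivial, hCdef, sub_mulVec, smul_mulVec, one_mulVec, dotProduct_sub,
      dotProduct_smul, smul_eq_mul, dotProduct_comm]
    nlinarith [dotProduct_comm x (S1 *ᵥ x), dotProduct_comm x (S2 *ᵥ x)]
  have strictpos : ∀ v : Fin N → ℝ, v ≠ 0 → 0 < (Tt *ᵥ v) ⬝ᵥ v := by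
    intro v hv
    rw [quadform v]
    set x : Fin N → ℝ := sp⁻¹ *ᵥ v with hxdef
    set w : Fin N → ℝ := sq *ᵥ x with hwdef
    set u : Fin N → ℝ := R⁻¹ *ᵥ w with hudef
    have hu : u ≠ 0 := by
      intro hu0
      apply hv
      have hw0 : w = 0 := by rw [← hRRi w, ← hudef, hu0, mulVec_zero]
      have hx0 : x = 0 := by
        have : sq⁻¹ *ᵥ w = x := by
          rw [hwdef, mulVec_mulVec, nonsing_inv_mul _ uQ, one_mulVec]
        rw [← this, hw0, mulVec_zero]
      have : sp *ᵥ x = v := by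
        rw [hxdef, mulVec_mulVec, mul_nonsing_inv _ uP, one_mulVec]
      rw [← this, hx0, mulVec_zero]
    have hCC : (C * C).PosSemidef := by
      have := hCpsd.pow 2; rwa [pow_two] at this
    have h1 := psd_quad_nonneg hCC u
    have h2 := pd_quad_pos hCd hu
    rw [idRC, add_mulVec, add_dotProduct, smul_mulVec, smul_dotProduct, smul_eq_mul]
    nlinarith
  refine ⟨strictpos, fun μ hμ => ?_⟩
  rw [spectrum.mem_iff, Matrix.isUnit_iff_isUnit_det, isUnit_iff_ne_zero] at hμ
  push_neg at hμ
  obtain ⟨v0, hv0, hveq⟩ := (Matrix.exists_mulVec_eq_zero_iff).mpr hμ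
  have hTv : Tt *ᵥ v0 = μ • v0 := by
    rw [Algebra.algebraMap_eq_smul_one, sub_mulVec, smul_mulVec, one_mulVec] at hveq
    exact (sub_eq_zero.mp hveq).symm
  have hq : (Tt *ᵥ v0) ⬝ᵥ v0 = μ * (v0 ⬝ᵥ v0) := by
    rw [hTv, smul_dotProduct, smul_eq_mul]
  have hvv0 := hxxpos v0 hv0
  have hqpos := strictpos v0 hv0
  have hqle := upper v0
  rw [hq] at hqpos hqle
  constructor
  · nlinarith
  · exact le_of_mul_le_mul_right hqle hvv0
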